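/- Any two countable generic orientations of generic bipartite graphs are isomorphic (via an isomorphism preserving the bipartition). -/

import Mathlib

/-- A 2-partite digraph `D = (X, Y, E)`: `X` and `Y` are disjoint sets covering the
vertex set, every edge goes between the two sides, and no two opposite edges exist. -/
structure TwoPartiteDigraph (V : Type*) where
  X : Set V
  Y : Set V
  cover : X ∪ Y = Set.univ
  disj : Disjoint X Y
  E : V → V → Prop
  mem_of_edge : ∀ u v, E u v → (u ∈ X ∧ v ∈ Y) ∨ (u ∈ Y ∧ v ∈ X)
  not_opposite : ∀ u v, E u v → ¬ E v u

namespace TwoPartiteDigraph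

variable {V V₁ V₂ : Type*}

/-- Out-neighbourhood (successors). -/
def Nplus (D : TwoPartiteDigraph V) (v : V) : Set V := {w | D.E v w}

/-- In-neighbourhood (predecessors). -/
def Nminus (D : TwoPartiteDigraph V) (v : V) : Set V := {w | D.E w v}

/-- Adjacency in the underlying undirected bipartite graph. -/
def Adj (D : TwoPartiteDigraph V) (u v : V) : Prop := D.E u v ∨ D.E v u

/-- `v^⊥`: the vertices on the other side not adjacent to `v`. -/
def perp (D : TwoPartiteDigraph V) (v : V) : Set V :=
  {w | ((v ∈ D.X ∧ w ∈ D.Y) ∨ (v ∈ D.Y ∧ w ∈ D.X)) ∧ ¬ D.Adj v w}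

/-- `D` is bipartite if all edges go from `X` to `Y`, or all from `Y` to `X`. -/
def Bipartite (D : TwoPartiteDigraph V) : Prop :=
  (∀ u v, D.E u v → u ∈ D.X) ∨ (∀ u v, D.E u v → u ∈ D.Y)

/-- `φ` is an isomorphism between the subdigraphs induced on `A` and on `φ '' A`,
respecting the bipartition. -/
def IsPartialIso (D : TwoPartiteDigraph V) (A : Set V) (φ : V → V) : Prop :=
  Set.InjOn φ A ∧ (∀ a ∈ A, (a ∈ D.X ↔ φ a ∈ D.X)) ∧ (∀ a ∈ A, (a ∈ D.Y ↔ φ a ∈ D.Y)) ∧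
  ∀ a ∈ A, ∀ b ∈ A, (D.E a b ↔ D.E (φ a) (φ b))

/-- A bipartition-preserving automorphism of `D`. -/
def IsAuto (D : TwoPartiteDigraph V) (α : Equiv.Perm V) : Prop :=
  (∀ v, v ∈ D.X ↔ α v ∈ D.X) ∧ (∀ v, v ∈ D.Y ↔ α v ∈ D.Y) ∧
  ∀ u v, D.E u v ↔ D.E (α u) (α v)

/-- `D` is homogeneous: every isomorphism between finite induced subdigraphs respecting
the bipartition extends to a bipartition-preserving automorphism of `D`. -/
def Homogeneous (D : TwoPartiteDigraph V) : Prop :=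
  ∀ A : Set V, A.Finite → ∀ φ : V → V, D.IsPartialIso A φ →
    ∃ α : Equiv.Perm V, D.IsAuto α ∧ ∀ a ∈ A, α a = φ a

/-- The underlying undirected bipartite graph is complete bipartite. -/
def CompleteBip (D : TwoPartiteDigraph V) : Prop := ∀ x ∈ D.X, ∀ y ∈ D.Y, D.Adj x y

/-- `D` is a generic 2-partite digraph. -/
def IsGeneric (D : TwoPartiteDigraph V) : Prop :=
  D.CompleteBip ∧
  ∀ AX BX : Set V, AX.Finite → BX.Finite → AX ⊆ D.X → BX ⊆ D.X → Disjoint AX BX →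
  ∀ AY BY : Set V, AY.Finite → BY.Finite → AY ⊆ D.Y → BY ⊆ D.Y → Disjoint AY BY →
    (∃ y ∈ D.Y, AX ⊆ D.Nplus y ∧ BX ⊆ D.Nminus y) ∧
    (∃ x ∈ D.X, AY ⊆ D.Nplus x ∧ BY ⊆ D.Nminus x)

/-- `D` is a generic orientation of a generic bipartite graph. -/
def IsGenericOrientation (D : TwoPartiteDigraph V) : Prop :=
  ∀ AX BX CX : Set V, AX.Finite → BX.Finite → CX.Finite →
    AX ⊆ D.X → BX ⊆ D.X → CX ⊆ D.X →
    Disjoint AX BX → Disjoint AX CX → Disjoint BX CX →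
  ∀ AY BY CY : Set V, AY.Finite → BY.Finite → CY.Finite →
    AY ⊆ D.Y → BY ⊆ D.Y → CY ⊆ D.Y →
    Disjoint AY BY → Disjoint AY CY → Disjoint BY CY →
    (∃ y ∈ D.Y, AX ⊆ D.Nplus y ∧ BX ⊆ D.Nminus y ∧ CX ⊆ D.perp y) ∧
    (∃ x ∈ D.X, AY ⊆ D.Nplus x ∧ BY ⊆ D.Nminus x ∧ CY ⊆ D.perp x)

/-- `D` is (a copy of) `M_κ` with the matching oriented from `X` to `Y`:
there is a bijection `m : X → Y` such that the edges from `X` to `Y` form the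
perfect matching `{(x, m x)}` and the edges from `Y` to `X` form its bipartite
complement. -/
def IsMFixed (D : TwoPartiteDigraph V) : Prop :=
  ∃ m : V → V, Set.BijOn m D.X D.Y ∧
    (∀ x ∈ D.X, ∀ y ∈ D.Y, (D.E x y ↔ y = m x)) ∧
    (∀ x ∈ D.X, ∀ y ∈ D.Y, (D.E y x ↔ y ≠ m x))

/-- `D` is (a copy of) `M_κ`: one of the two directed parts is a perfect matching and
the other is the bipartite complement of a perfect matching. -/
def IsM (D : TwoPartiteDigraph V) : Prop :=
  ∃ m : V → V, Set.BijOn m D.X D.Y ∧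
    ((∀ x ∈ D.X, ∀ y ∈ D.Y, (D.E x y ↔ y = m x) ∧ (D.E y x ↔ y ≠ m x)) ∨
     (∀ x ∈ D.X, ∀ y ∈ D.Y, (D.E y x ↔ y = m x) ∧ (D.E x y ↔ y ≠ m x)))

/-- Isomorphism of 2-partite digraphs respecting the bipartitions. -/
def Isomorphic (D₁ : TwoPartiteDigraph V₁) (D₂ : TwoPartiteDigraph V₂) : Prop :=
  ∃ e : V₁ ≃ V₂, (∀ v, v ∈ D₁.X ↔ e v ∈ D₂.X) ∧ (∀ v, v ∈ D₁.Y ↔ e v ∈ D₂.Y) ∧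
    ∀ u v, D₁.E u v ↔ D₂.E (e u) (e v)

/-- `φ` is an isomorphism of finite induced subgraphs of the underlying undirected
bipartite graph, respecting the bipartition. -/
def IsGraphPartialIso (D : TwoPartiteDigraph V) (A : Set V) (φ : V → V) : Prop :=
  Set.InjOn φ A ∧ (∀ a ∈ A, (a ∈ D.X ↔ φ a ∈ D.X)) ∧ (∀ a ∈ A, (a ∈ D.Y ↔ φ a ∈ D.Y)) ∧
  ∀ a ∈ A, ∀ b ∈ A, (D.Adj a b ↔ D.Adj (φ a) (φ b))

/-- The underlying undirected bipartite graph of `D` is homogeneous. -/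
def GraphHomogeneous (D : TwoPartiteDigraph V) : Prop :=
  ∀ A : Set V, A.Finite → ∀ φ : V → V, D.IsGraphPartialIso A φ →
    ∃ α : Equiv.Perm V, ((∀ v, v ∈ D.X ↔ α v ∈ D.X) ∧ (∀ v, v ∈ D.Y ↔ α v ∈ D.Y) ∧
      ∀ u v, D.Adj u v ↔ D.Adj (α u) (α v)) ∧ ∀ a ∈ A, α a = φ a

/-- The underlying undirected bipartite graph of `D` is generic. -/
def UnderlyingGeneric (D : TwoPartiteDigraph V) : Prop :=
  ∀ UX VX : Set V, UX.Finite → VX.Finite → UX ⊆ D.X → VX ⊆ D.X → Disjoint UX VX →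
  ∀ UY VY : Set V, UY.Finite → VY.Finite → UY ⊆ D.Y → VY ⊆ D.Y → Disjoint UY VY →
    (∃ y ∈ D.Y, (∀ u ∈ UX, D.Adj y u) ∧ ∀ v ∈ VX, ¬ D.Adj y v) ∧
    (∃ x ∈ D.X, (∀ u ∈ UY, D.Adj x u) ∧ ∀ v ∈ VY, ¬ D.Adj x v)

end TwoPartiteDigraph

open TwoPartiteDigraph

namespace TwoPartiteDigraph

variable {V V₁ V₂ : Type*}

lemma not_mem_Y_of_mem_X {D : TwoPartiteDigraph V} {v : V} (h : v ∈ D.X) : v ∉ D.Y :=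
  fun h' => Set.disjoint_left.mp D.disj h h'

lemma mem_X_or_Y (D : TwoPartiteDigraph V) (v : V) : v ∈ D.X ∨ v ∈ D.Y := by
  have := D.cover
  rw [Set.eq_univ_iff_forall] at this
  exact this v

lemma not_E_XX {D : TwoPartiteDigraph V} {u v : V} (hu : u ∈ D.X) (hv : v ∈ D.X) :
    ¬ D.E u v := by
  intro h
  rcases D.mem_of_edge u v h with ⟨_, h2⟩ | ⟨hh1, _⟩
  · exact not_mem_Y_of_mem_X hv h2
  · exact not_mem_Y_of_mem_X hu hh1

lemma not_E_YY {D : TwoPartiteDigraph V} {u v : V} (hu : u ∈ D.Y) (hv : v ∈ D.Y) :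
    ¬ D.E u v := by
  intro h
  rcases D.mem_of_edge u v h with ⟨hh1, _⟩ | ⟨_, h2⟩
  · exact not_mem_Y_of_mem_X hh1 hu
  · exact not_mem_Y_of_mem_X h2 hv

/-- Swap the two sides of a 2-partite digraph. -/
def flip (D : TwoPartiteDigraph V) : TwoPartiteDigraph V where
  X := D.Y
  Y := D.X
  cover := by rw [Set.union_comm]; exact D.cover
  disj := D.disj.symm
  E := D.E
  mem_of_edge := fun u v h => (D.mem_of_edge u v h).symm
  not_opposite := D.not_opposite

@[simp] lemma flip_X (D : TwoPartiteDigraph V) : D.flip.X = D.Y := rfl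
@[simp] lemma flip_Y (D : TwoPartiteDigraph V) : D.flip.Y = D.X := rfl
@[simp] lemma flip_E (D : TwoPartiteDigraph V) : D.flip.E = D.E := rfl

@[simp] lemma flip_Nplus (D : TwoPartiteDigraph V) (v : V) : D.flip.Nplus v = D.Nplus v := rfl
@[simp] lemma flip_Nminus (D : TwoPartiteDigraph V) (v : V) : D.flip.Nminus v = D.Nminus v := rfl

@[simp] lemma flip_Adj (D : TwoPartiteDigraph V) : D.flip.Adj = D.Adj := rfl

@[simp] lemma flip_perp (D : TwoPartiteDigraph V) (v : V) : D.flip.perp v = D.perp v := by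
  ext w
  simp only [perp, flip_X, flip_Y, flip_Adj, Set.mem_setOf_eq]
  tauto

lemma IsGenericOrientation.flip {D : TwoPartiteDigraph V} (h : D.IsGenericOrientation) :
    D.flip.IsGenericOrientation := by
  intro AX BX CX hAXf hBXf hCXf hAX hBX hCX hABX hACX hBCX
  intro AY BY CY hAYf hBYf hCYf hAY hBY hCY hABY hACY hBCY
  obtain ⟨H1, H2⟩ := h AY BY CY hAYf hBYf hCYf hAY hBY hCY hABY hACY hBCY
    AX BX CX hAXf hBXf hCXf hAX hBX hCX hABX hACX hBCX
  constructor
  · obtain ⟨x, hx, hx1, hx2, hx3⟩ := H2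
    exact ⟨x, hx, hx1, hx2, by rw [flip_perp]; exact hx3⟩
  · obtain ⟨y, hy, hy1, hy2, hy3⟩ := H1
    exact ⟨y, hy, hy1, hy2, by rw [flip_perp]; exact hy3⟩

/-- Key lemma: a witness on the `X` side with prescribed relations to finitely many
`Y`-vertices can be found avoiding any finite set. -/
lemma exists_witness_X {D : TwoPartiteDigraph V} (h : D.IsGenericOrientation)
    (AY BY CY F : Set V) (hAf : AY.Finite) (hBf : BY.Finite) (hCf : CY.Finite) (hFf : F.Finite)
    (hA : AY ⊆ D.Y) (hB : BY ⊆ D.Y) (hC : CY ⊆ D.Y) (hF : F ⊆ D.X)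
    (hAB : Disjoint AY BY) (hAC : Disjoint AY CY) (hBC : Disjoint BY CY) :
    ∃ x ∈ D.X, x ∉ F ∧ AY ⊆ D.Nplus x ∧ BY ⊆ D.Nminus x ∧ CY ⊆ D.perp x := by
  -- Step 1: x₀ dominating AY ∪ BY ∪ CY
  obtain ⟨-, x₀, hx₀X, hx₀, -, -⟩ :=
    h ∅ ∅ ∅ Set.finite_empty Set.finite_empty Set.finite_empty
      (Set.empty_subset _) (Set.empty_subset _) (Set.empty_subset _)
      (by simp) (by simp) (by simp)
      (AY ∪ BY ∪ CY) ∅ ∅ ((hAf.union hBf).union hCf) Set.finite_empty Set.finite_empty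
      (Set.union_subset (Set.union_subset hA hB) hC) (Set.empty_subset _) (Set.empty_subset _)
      (by simp) (by simp) (by simp)
  -- Step 2: y dominating insert x₀ F
  obtain ⟨y, hyY, hy, -, -⟩ :=
    (h (insert x₀ F) ∅ ∅ (hFf.insert x₀) Set.finite_empty Set.finite_empty
      (Set.insert_subset hx₀X hF) (Set.empty_subset _) (Set.empty_subset _)
      (by simp) (by simp) (by simp)
      ∅ ∅ ∅ Set.finite_empty Set.finite_empty Set.finite_empty
      (Set.empty_subset _) (Set.empty_subset _) (Set.empty_subset _)
      (by simp) (by simp) (by simp)).1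
  have hyG : y ∉ AY ∪ BY ∪ CY :=
    fun hyG => D.not_opposite x₀ y (hx₀ hyG) (hy (Set.mem_insert _ _))
  -- Step 3: final witness
  obtain ⟨-, x, hxX, hxA, hxB, hxC⟩ :=
    h ∅ ∅ ∅ Set.finite_empty Set.finite_empty Set.finite_empty
      (Set.empty_subset _) (Set.empty_subset _) (Set.empty_subset _)
      (by simp) (by simp) (by simp)
      (insert y AY) BY CY (hAf.insert y) hBf hCf
      (Set.insert_subset hyY hA) hB hC
      (by rw [Set.disjoint_left]
          rintro b hb hbB
          rcases Set.mem_insert_iff.mp hb with rfl | hb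
          · exact hyG (by simp [hbB])
          · exact Set.disjoint_left.mp hAB hb hbB)
      (by rw [Set.disjoint_left]
          rintro b hb hbB
          rcases Set.mem_insert_iff.mp hb with rfl | hb
          · exact hyG (by simp [hbB])
          · exact Set.disjoint_left.mp hAC hb hbB)
      hBC
  refine ⟨x, hxX, ?_, fun b hb => hxA (Set.mem_insert_of_mem _ hb), hxB, hxC⟩
  intro hxF
  exact D.not_opposite y x (hy (Set.mem_insert_of_mem _ hxF)) (hxA (Set.mem_insert _ _))

/-- A finite partial isomorphism recorded as a list of pairs. -/
def GoodL (D₁ : TwoPartiteDigraph V₁) (D₂ : TwoPartiteDigraph V₂) (L : List (V₁ × V₂)) : Prop :=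
  (∀ p ∈ L, (p.1 ∈ D₁.X ↔ p.2 ∈ D₂.X) ∧ (p.1 ∈ D₁.Y ↔ p.2 ∈ D₂.Y)) ∧
  (∀ p ∈ L, ∀ q ∈ L, (p.1 = q.1 ↔ p.2 = q.2)) ∧
  (∀ p ∈ L, ∀ q ∈ L, (D₁.E p.1 q.1 ↔ D₂.E p.2 q.2))

lemma goodL_nil (D₁ : TwoPartiteDigraph V₁) (D₂ : TwoPartiteDigraph V₂) :
    GoodL D₁ D₂ [] := by
  refine ⟨?_, ?_, ?_⟩ <;> simp

lemma goodL_swap {D₁ : TwoPartiteDigraph V₁} {D₂ : TwoPartiteDigraph V₂}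
    {L : List (V₁ × V₂)} (h : GoodL D₁ D₂ L) : GoodL D₂ D₁ (L.map Prod.swap) := by
  obtain ⟨h1, h2, h3⟩ := h
  refine ⟨?_, ?_, ?_⟩
  · simp only [List.mem_map]
    rintro p ⟨p', hp', rfl⟩
    exact ⟨(h1 p' hp').1.symm, (h1 p' hp').2.symm⟩
  · simp only [List.mem_map]
    rintro p ⟨p', hp', rfl⟩ q ⟨q', hq', rfl⟩
    exact (h2 p' hp' q' hq').symm
  · simp only [List.mem_map]
    rintro p ⟨p', hp', rfl⟩ q ⟨q', hq', rfl⟩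
    exact (h3 p' hp' q' hq').symm

lemma goodL_flip {D₁ : TwoPartiteDigraph V₁} {D₂ : TwoPartiteDigraph V₂}
    {L : List (V₁ × V₂)} (h : GoodL D₁ D₂ L) : GoodL D₁.flip D₂.flip L := by
  obtain ⟨h1, h2, h3⟩ := h
  exact ⟨fun p hp => ⟨(h1 p hp).2, (h1 p hp).1⟩, h2, h3⟩

lemma goodL_cons_of_mem {D₁ : TwoPartiteDigraph V₁} {D₂ : TwoPartiteDigraph V₂}
    {L : List (V₁ × V₂)} (h : GoodL D₁ D₂ L) {p : V₁ × V₂} (hp : p ∈ L) :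
    GoodL D₁ D₂ (p :: L) := by
  obtain ⟨h1, h2, h3⟩ := h
  have hmem : ∀ r, r ∈ p :: L → r ∈ L := by
    intro r hr
    rcases List.mem_cons.mp hr with rfl | hr
    · exact hp
    · exact hr
  exact ⟨fun q hq => h1 q (hmem q hq), fun q hq r hr => h2 q (hmem q hq) r (hmem r hr),
    fun q hq r hr => h3 q (hmem q hq) r (hmem r hr)⟩

/-- Extension lemma for a new vertex on the `X` side. -/
lemma extend_newX (D₁ : TwoPartiteDigraph V₁) (D₂ : TwoPartiteDigraph V₂)
    (h₂ : D₂.IsGenericOrientation) (L : List (V₁ × V₂)) (hL : GoodL D₁ D₂ L)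
    (v : V₁) (hv : v ∈ D₁.X) (hvL : ∀ b, (v, b) ∉ L) :
    ∃ w, GoodL D₁ D₂ ((v, w) :: L) := by
  obtain ⟨h1, h2, h3⟩ := hL
  set AY : Set V₂ := {b | ∃ a, (a, b) ∈ L ∧ D₁.E v a} with hAYdef
  set BY : Set V₂ := {b | ∃ a, (a, b) ∈ L ∧ D₁.E a v} with hBYdef
  set CY : Set V₂ := {b | ∃ a, (a, b) ∈ L ∧ a ∈ D₁.Y ∧ ¬ D₁.Adj v a} with hCYdef
  set F : Set V₂ := {b | (∃ a, (a, b) ∈ L) ∧ b ∈ D₂.X} with hFdef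
  have hran : (Prod.snd '' {p : V₁ × V₂ | p ∈ L}).Finite := L.finite_toSet.image _
  have hAYf : AY.Finite := hran.subset (by rintro b ⟨a, haL, -⟩; exact ⟨(a, b), haL, rfl⟩)
  have hBYf : BY.Finite := hran.subset (by rintro b ⟨a, haL, -⟩; exact ⟨(a, b), haL, rfl⟩)
  have hCYf : CY.Finite := hran.subset (by rintro b ⟨a, haL, -⟩; exact ⟨(a, b), haL, rfl⟩)
  have hFf : F.Finite := hran.subset (by rintro b ⟨⟨a, haL⟩, -⟩; exact ⟨(a, b), haL, rfl⟩)
  have inj2 : ∀ {a a' : V₁} {b : V₂}, (a, b) ∈ L → (a', b) ∈ L → a = a' :=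
    fun {a a' b} ha ha' => (h2 (a, b) ha (a', b) ha').mpr rfl
  have memY : ∀ {a : V₁} {b : V₂}, (a, b) ∈ L → a ∈ D₁.Y → b ∈ D₂.Y :=
    fun {a b} hab ha => ((h1 (a, b) hab).2).mp ha
  have hYofE : ∀ {a : V₁}, D₁.E v a → a ∈ D₁.Y := by
    intro a he
    rcases D₁.mem_of_edge v a he with ⟨-, h'⟩ | ⟨h', -⟩
    · exact h'
    · exact absurd h' (not_mem_Y_of_mem_X hv)
  have hYofE' : ∀ {a : V₁}, D₁.E a v → a ∈ D₁.Y := by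
    intro a he
    rcases D₁.mem_of_edge a v he with ⟨-, h'⟩ | ⟨h', -⟩
    · exact absurd h' (not_mem_Y_of_mem_X hv)
    · exact h'
  have hAsub : AY ⊆ D₂.Y := by rintro b ⟨a, haL, he⟩; exact memY haL (hYofE he)
  have hBsub : BY ⊆ D₂.Y := by rintro b ⟨a, haL, he⟩; exact memY haL (hYofE' he)
  have hCsub : CY ⊆ D₂.Y := by rintro b ⟨a, haL, ha, -⟩; exact memY haL ha
  have hABd : Disjoint AY BY := by
    rw [Set.disjoint_left]
    rintro b ⟨a, haL, he⟩ ⟨a', haL', he'⟩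
    exact D₁.not_opposite v a he (inj2 haL haL' ▸ he')
  have hACd : Disjoint AY CY := by
    rw [Set.disjoint_left]
    rintro b ⟨a, haL, he⟩ ⟨a', haL', -, hna⟩
    exact hna (Or.inl (inj2 haL' haL ▸ he))
  have hBCd : Disjoint BY CY := by
    rw [Set.disjoint_left]
    rintro b ⟨a, haL, he⟩ ⟨a', haL', -, hna⟩
    exact hna (Or.inr (inj2 haL' haL ▸ he))
  obtain ⟨w, hwX, hwF, hwA, hwB, hwC⟩ :=
    exists_witness_X h₂ AY BY CY F hAYf hBYf hCYf hFf hAsub hBsub hCsub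
      (fun b hb => hb.2) hABd hACd hBCd
  refine ⟨w, ?_, ?_, ?_⟩
  · intro p hp
    rcases List.mem_cons.mp hp with rfl | hp
    · exact ⟨iff_of_true hv hwX,
        iff_of_false (not_mem_Y_of_mem_X hv) (not_mem_Y_of_mem_X hwX)⟩
    · exact h1 p hp
  · have key : ∀ q ∈ L, ((v, w).1 = q.1 ↔ (v, w).2 = q.2) := by
      rintro ⟨a, b⟩ hq
      dsimp only
      refine iff_of_false ?_ ?_
      · intro hva; exact hvL b (hva ▸ hq)
      · intro hwb
        rcases D₂.mem_X_or_Y b with hbX | hbY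
        · exact hwF (hwb ▸ ⟨⟨a, hq⟩, hbX⟩)
        · exact not_mem_Y_of_mem_X hwX (hwb ▸ hbY)
    intro p hp q hq
    rcases List.mem_cons.mp hp with rfl | hp <;> rcases List.mem_cons.mp hq with rfl | hq
    · simp
    · exact key q hq
    · constructor
      · intro h'; exact ((key p hp).mp h'.symm).symm
      · intro h'; exact ((key p hp).mpr h'.symm).symm
    · exact h2 p hp q hq
  · have key1 : ∀ q ∈ L, (D₁.E v q.1 ↔ D₂.E w q.2) := by
      rintro ⟨a, b⟩ hq
      dsimp only
      rcases D₁.mem_X_or_Y a with haX | haY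
      · exact iff_of_false (not_E_XX hv haX) (not_E_XX hwX ((h1 (a, b) hq).1.mp haX))
      · by_cases hva : D₁.E v a
        · exact iff_of_true hva (hwA ⟨a, hq, hva⟩)
        · by_cases hav : D₁.E a v
          · exact iff_of_false hva (fun h' => D₂.not_opposite b w (hwB ⟨a, hq, hav⟩) h')
          · have hbC : b ∈ CY := ⟨a, hq, haY, fun h' => h'.elim hva hav⟩
            exact iff_of_false hva (fun h' => (hwC hbC).2 (Or.inl h'))
    have key2 : ∀ q ∈ L, (D₁.E q.1 v ↔ D₂.E q.2 w) := by
      rintro ⟨a, b⟩ hq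
      dsimp only
      rcases D₁.mem_X_or_Y a with haX | haY
      · exact iff_of_false (not_E_XX haX hv) (not_E_XX ((h1 (a, b) hq).1.mp haX) hwX)
      · by_cases hav : D₁.E a v
        · exact iff_of_true hav (hwB ⟨a, hq, hav⟩)
        · by_cases hva : D₁.E v a
          · exact iff_of_false hav (fun h' => D₂.not_opposite w b (hwA ⟨a, hq, hva⟩) h')
          · have hbC : b ∈ CY := ⟨a, hq, haY, fun h' => h'.elim hva hav⟩
            exact iff_of_false hav (fun h' => (hwC hbC).2 (Or.inr h'))
    intro p hp q hq
    rcases List.mem_cons.mp hp with rfl | hp <;> rcases List.mem_cons.mp hq with rfl | hq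
    · exact iff_of_false (not_E_XX hv hv) (not_E_XX hwX hwX)
    · exact key1 q hq
    · exact key2 p hp
    · exact h3 p hp q hq

lemma extend_fwd (D₁ : TwoPartiteDigraph V₁) (D₂ : TwoPartiteDigraph V₂)
    (h₂ : D₂.IsGenericOrientation) (L : List (V₁ × V₂)) (hL : GoodL D₁ D₂ L) (v : V₁) :
    ∃ w, GoodL D₁ D₂ ((v, w) :: L) := by
  by_cases hvd : ∃ b, (v, b) ∈ L
  · obtain ⟨b, hb⟩ := hvd
    exact ⟨b, goodL_cons_of_mem hL hb⟩
  · push_neg at hvd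
    rcases D₁.mem_X_or_Y v with hv | hv
    · exact extend_newX D₁ D₂ h₂ L hL v hv hvd
    · obtain ⟨w, hw⟩ :=
        extend_newX D₁.flip D₂.flip h₂.flip L (goodL_flip hL) v hv hvd
      obtain ⟨g1, g2, g3⟩ := hw
      exact ⟨w, fun p hp => ⟨(g1 p hp).2, (g1 p hp).1⟩, g2, g3⟩

lemma extend_bwd (D₁ : TwoPartiteDigraph V₁) (D₂ : TwoPartiteDigraph V₂)
    (h₁ : D₁.IsGenericOrientation) (L : List (V₁ × V₂)) (hL : GoodL D₁ D₂ L) (w : V₂) :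
    ∃ v, GoodL D₁ D₂ ((v, w) :: L) := by
  obtain ⟨a, ha⟩ := extend_fwd D₂ D₁ h₁ (L.map Prod.swap) (goodL_swap hL) w
  refine ⟨a, ?_⟩
  have := goodL_swap ha
  simpa [List.map_map, Prod.swap_swap_eq] using this

/-- The back-and-forth chain. -/
noncomputable def chainN (D₁ : TwoPartiteDigraph V₁) (D₂ : TwoPartiteDigraph V₂)
    (e₁ : ℕ → V₁) (e₂ : ℕ → V₂)
    (H : ∀ L : List (V₁ × V₂), GoodL D₁ D₂ L → ∀ v w, ∃ L', GoodL D₁ D₂ L' ∧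
      (∀ p ∈ L, p ∈ L') ∧ (∃ b, (v, b) ∈ L') ∧ (∃ a, (a, w) ∈ L')) :
    ℕ → {L : List (V₁ × V₂) // GoodL D₁ D₂ L}
  | 0 => ⟨[], goodL_nil D₁ D₂⟩
  | n + 1 =>
    let prev := chainN D₁ D₂ e₁ e₂ H n
    ⟨(H prev.1 prev.2 (e₁ n) (e₂ n)).choose,
      (H prev.1 prev.2 (e₁ n) (e₂ n)).choose_spec.1⟩

lemma chainN_spec (D₁ : TwoPartiteDigraph V₁) (D₂ : TwoPartiteDigraph V₂)
    (e₁ : ℕ → V₁) (e₂ : ℕ → V₂)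
    (H : ∀ L : List (V₁ × V₂), GoodL D₁ D₂ L → ∀ v w, ∃ L', GoodL D₁ D₂ L' ∧
      (∀ p ∈ L, p ∈ L') ∧ (∃ b, (v, b) ∈ L') ∧ (∃ a, (a, w) ∈ L')) (n : ℕ) :
    (∀ p ∈ (chainN D₁ D₂ e₁ e₂ H n).1, p ∈ (chainN D₁ D₂ e₁ e₂ H (n + 1)).1) ∧
    (∃ b, (e₁ n, b) ∈ (chainN D₁ D₂ e₁ e₂ H (n + 1)).1) ∧
    (∃ a, (a, e₂ n) ∈ (chainN D₁ D₂ e₁ e₂ H (n + 1)).1) := by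
  have := (H (chainN D₁ D₂ e₁ e₂ H n).1 (chainN D₁ D₂ e₁ e₂ H n).2 (e₁ n) (e₂ n)).choose_spec
  exact ⟨this.2.1, this.2.2.1, this.2.2.2⟩

end TwoPartiteDigraph


open TwoPartiteDigraph

/-- Any two countable generic orientations of generic bipartite graphs are isomorphic
via a bipartition-preserving isomorphism. -/
theorem stmt_4 {V₁ V₂ : Type*} [Countable V₁] [Countable V₂]
    (D₁ : TwoPartiteDigraph V₁) (D₂ : TwoPartiteDigraph V₂)
    (h₁ : D₁.IsGenericOrientation) (h₂ : D₂.IsGenericOrientation) :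
    Isomorphic D₁ D₂ := by
  classical
  obtain ⟨x₁, hx₁X, -⟩ := exists_witness_X h₁ ∅ ∅ ∅ ∅
    Set.finite_empty Set.finite_empty Set.finite_empty Set.finite_empty
    (Set.empty_subset _) (Set.empty_subset _) (Set.empty_subset _) (Set.empty_subset _)
    (by simp) (by simp) (by simp)
  obtain ⟨x₂, hx₂X, -⟩ := exists_witness_X h₂ ∅ ∅ ∅ ∅
    Set.finite_empty Set.finite_empty Set.finite_empty Set.finite_empty
    (Set.empty_subset _) (Set.empty_subset _) (Set.empty_subset _) (Set.empty_subset _)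
    (by simp) (by simp) (by simp)
  have hne₁ : Nonempty V₁ := ⟨x₁⟩
  have hne₂ : Nonempty V₂ := ⟨x₂⟩
  obtain ⟨e₁, he₁⟩ := exists_surjective_nat V₁
  obtain ⟨e₂, he₂⟩ := exists_surjective_nat V₂
  have H : ∀ L : List (V₁ × V₂), GoodL D₁ D₂ L → ∀ v w, ∃ L', GoodL D₁ D₂ L' ∧
      (∀ p ∈ L, p ∈ L') ∧ (∃ b, (v, b) ∈ L') ∧ (∃ a, (a, w) ∈ L') := by
    intro L hL v w
    obtain ⟨b, hb⟩ := extend_fwd D₁ D₂ h₂ L hL v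
    obtain ⟨a, ha⟩ := extend_bwd D₁ D₂ h₁ _ hb w
    exact ⟨(a, w) :: (v, b) :: L, ha,
      fun p hp => List.mem_cons_of_mem _ (List.mem_cons_of_mem _ hp),
      ⟨b, List.mem_cons_of_mem _ List.mem_cons_self⟩,
      ⟨a, List.mem_cons_self⟩⟩
  have spec := chainN_spec D₁ D₂ e₁ e₂ H
  set C := chainN D₁ D₂ e₁ e₂ H with hC
  have mono : ∀ m n, m ≤ n → ∀ p ∈ (C m).1, p ∈ (C n).1 := by
    intro m n hmn
    induction n, hmn using Nat.le_induction with
    | base => exact fun p hp => hp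
    | succ n hmn ih => exact fun p hp => (spec n).1 p (ih p hp)
  have common : ∀ {v v' : V₁} {w w' : V₂}, (∃ n, (v, w) ∈ (C n).1) →
      (∃ n, (v', w') ∈ (C n).1) → ∃ n, (v, w) ∈ (C n).1 ∧ (v', w') ∈ (C n).1 := by
    rintro v v' w w' ⟨n, hn⟩ ⟨m, hm⟩
    exact ⟨max n m, mono n _ (le_max_left n m) _ hn, mono m _ (le_max_right n m) _ hm⟩
  have func : ∀ {v : V₁} {w w' : V₂}, (∃ n, (v, w) ∈ (C n).1) →
      (∃ n, (v, w') ∈ (C n).1) → w = w' := by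
    intro v w w' h h'
    obtain ⟨n, hn, hn'⟩ := common h h'
    exact ((C n).2.2.1 _ hn _ hn').mp rfl
  have injf : ∀ {v v' : V₁} {w : V₂}, (∃ n, (v, w) ∈ (C n).1) →
      (∃ n, (v', w) ∈ (C n).1) → v = v' := by
    intro v v' w h h'
    obtain ⟨n, hn, hn'⟩ := common h h'
    exact ((C n).2.2.1 _ hn _ hn').mpr rfl
  have tot1 : ∀ v, ∃ w, ∃ n, (v, w) ∈ (C n).1 := by
    intro v
    obtain ⟨k, rfl⟩ := he₁ v
    obtain ⟨b, hb⟩ := (spec k).2.1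
    exact ⟨b, k + 1, hb⟩
  have tot2 : ∀ w, ∃ v, ∃ n, (v, w) ∈ (C n).1 := by
    intro w
    obtain ⟨k, rfl⟩ := he₂ w
    obtain ⟨a, ha⟩ := (spec k).2.2
    exact ⟨a, k + 1, ha⟩
  choose f hf using tot1
  choose g hg using tot2
  refine ⟨⟨f, g, fun v => injf (hg (f v)) (hf v), fun w => func (hf (g w)) (hg w)⟩, ?_, ?_, ?_⟩
  · intro v
    obtain ⟨n, hn⟩ := hf v
    exact ((C n).2.1 _ hn).1
  · intro v
    obtain ⟨n, hn⟩ := hf v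
    exact ((C n).2.1 _ hn).2
  · intro u v
    obtain ⟨n, hn, hm⟩ := common (hf u) (hf v)
    exact (C n).2.2.2 _ hn _ hm
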